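/- arXiv:1407.1289 — 2 statements merged into one kernel-verified Lean document; each statement's English description precedes it below -/
import Mathlib

section
/- Let K = B^T B for a matrix B, and let K̃ be a symmetric PSD matrix satisfying c·x^T K x ≤ x^T K̃ x ≤ x^T K x for all x in the row span of K, where 0 < c ≤ 1. Then for every row b_i of B in the row span of K, the true leverage score τ_i = b_i^T K^+ b_i and the approximate score τ̃_i = b_i^T K̃^+ b_i satisfy τ_i ≤ τ̃_i ≤ (1/c)·τ_i. -/
open Matrix

def IsMoorePenrose {n : Type*} [Fintype n] (K Kp : Matrix n n ℝ) : Prop :=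
  K * Kp * K = K ∧ Kp * K * Kp = Kp ∧ (K * Kp)ᵀ = K * Kp ∧ (Kp * K)ᵀ = Kp * K

private lemma sym_dot {n : Type*} [Fintype n] {A : Matrix n n ℝ} (hA : Aᵀ = A)
    (u x : n → ℝ) : u ⬝ᵥ A *ᵥ x = (A *ᵥ u) ⬝ᵥ x := by
  rw [dotProduct_mulVec, ← hA, vecMul_transpose, hA]

private lemma mulVec_dot {n : Type*} [Fintype n] (A : Matrix n n ℝ) (u x : n → ℝ) :
    (A *ᵥ u) ⬝ᵥ x = u ⬝ᵥ Aᵀ *ᵥ x := by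
  rw [dotProduct_mulVec, vecMul_transpose]

/-- If b is orthogonal to ker A, then Q (A b) = b for a partial MP inverse Q. -/
private lemma proj_fix {n : Type*} [Fintype n] {A Q : Matrix n n ℝ}
    (h1 : A * Q * A = A) (h2 : (Q * A)ᵀ = Q * A) (b : n → ℝ)
    (horth : ∀ r, A *ᵥ r = 0 → b ⬝ᵥ r = 0) :
    Q *ᵥ (A *ᵥ b) = b := by
  set r := b - Q *ᵥ (A *ᵥ b) with hr
  have hAr : A *ᵥ r = 0 := by
    simp only [hr, mulVec_sub, mulVec_mulVec, ← Matrix.mul_assoc, h1, sub_self]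
  have h0 : b ⬝ᵥ r = 0 := horth r hAr
  have h1' : (Q *ᵥ (A *ᵥ b)) ⬝ᵥ r = 0 := by
    rw [mulVec_mulVec, mulVec_dot, h2, ← mulVec_mulVec, hAr, mulVec_zero, dotProduct_zero]
  have hrr : r ⬝ᵥ r = 0 := by
    rw [hr, sub_dotProduct, ← hr, h0, h1', sub_zero]
  have hr0 : r = 0 := dotProduct_self_eq_zero.mp hrr
  have := sub_eq_zero.mp (hr.symm.trans hr0 : b - Q *ᵥ (A *ᵥ b) = 0)
  exact this.symm

/-- For symmetric A with MP inverse Q, and b orthogonal to ker A: A (Q b) = b. -/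
private lemma range_fix {n : Type*} [Fintype n] {A Q : Matrix n n ℝ}
    (hA : Aᵀ = A) (hQ : IsMoorePenrose A Q) (b : n → ℝ)
    (horth : ∀ r, A *ᵥ r = 0 → b ⬝ᵥ r = 0) :
    A *ᵥ (Q *ᵥ b) = b := by
  obtain ⟨m1, m2, m3, m4⟩ := hQ
  have hQtA : Qᵀ * A = A * Q := by
    calc Qᵀ * A = Qᵀ * Aᵀ := by rw [hA]
    _ = (A * Q)ᵀ := by rw [Matrix.transpose_mul]
    _ = A * Q := m3
  have e2 : Qᵀ *ᵥ (A *ᵥ b) = b := by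
    apply proj_fix _ _ b horth
    · calc A * Qᵀ * A = Aᵀ * Qᵀ * Aᵀ := by rw [hA]
      _ = (A * (Q * A))ᵀ := by rw [Matrix.transpose_mul, Matrix.transpose_mul]
      _ = Aᵀ := by rw [← Matrix.mul_assoc, m1]
      _ = A := hA
    · calc (Qᵀ * A)ᵀ = Aᵀ * Q := by rw [Matrix.transpose_mul, Matrix.transpose_transpose]
      _ = A * Q := by rw [hA]
      _ = Qᵀ * A := hQtA.symm
  calc A *ᵥ (Q *ᵥ b) = (A * Q) *ᵥ b := mulVec_mulVec b A Q
  _ = (Qᵀ * A) *ᵥ b := by rw [hQtA]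
  _ = Qᵀ *ᵥ (A *ᵥ b) := (mulVec_mulVec b Qᵀ A).symm
  _ = b := e2

/-- Variational upper bound: for PSD A and A u = b, `2 b·x - x·Ax ≤ b·u`. -/
private lemma key_ineq {n : Type*} [Fintype n] {A : Matrix n n ℝ}
    (hA : Aᵀ = A) (hpos : ∀ x, 0 ≤ x ⬝ᵥ A *ᵥ x) {b u : n → ℝ}
    (hu : A *ᵥ u = b) (x : n → ℝ) :
    2 * (b ⬝ᵥ x) - x ⬝ᵥ A *ᵥ x ≤ b ⬝ᵥ u := by
  have h := hpos (x - u)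
  have expand : (x - u) ⬝ᵥ A *ᵥ (x - u)
      = x ⬝ᵥ A *ᵥ x - 2 * (b ⬝ᵥ x) + b ⬝ᵥ u := by
    rw [mulVec_sub, sub_dotProduct, dotProduct_sub, dotProduct_sub, hu]
    have e1 : u ⬝ᵥ A *ᵥ x = b ⬝ᵥ x := by rw [sym_dot hA, hu]
    have e2 : x ⬝ᵥ b = b ⬝ᵥ x := dotProduct_comm x b
    have e3 : u ⬝ᵥ b = b ⬝ᵥ u := dotProduct_comm u b
    rw [e1, e2, e3]; ring
  rw [expand] at h
  linarith

theorem approx_leverage_scores {m n : ℕ}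
    (B : Matrix (Fin m) (Fin n) ℝ)
    (K Kt : Matrix (Fin n) (Fin n) ℝ) (hK : K = Bᵀ * B)
    (hKt : Kt.PosSemidef)
    (hker : ∀ x : Fin n → ℝ, K.mulVec x = 0 ↔ Kt.mulVec x = 0)
    (c : ℝ) (hc0 : 0 < c) (hc1 : c ≤ 1)
    (happrox : ∀ x : Fin n → ℝ, (∃ y, x = K.mulVec y) →
      c * (x ⬝ᵥ K.mulVec x) ≤ x ⬝ᵥ Kt.mulVec x ∧ x ⬝ᵥ Kt.mulVec x ≤ x ⬝ᵥ K.mulVec x)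
    (Kp Ktp : Matrix (Fin n) (Fin n) ℝ)
    (hKp : IsMoorePenrose K Kp) (hKtp : IsMoorePenrose Kt Ktp)
    (i : Fin m) (hrow : ∃ y, B i = K.mulVec y) :
    B i ⬝ᵥ Kp.mulVec (B i) ≤ B i ⬝ᵥ Ktp.mulVec (B i) ∧
      B i ⬝ᵥ Ktp.mulVec (B i) ≤ (1 / c) * (B i ⬝ᵥ Kp.mulVec (B i)) := by
  set b := B i with hb
  -- symmetry of K and Kt
  have hKsym : Kᵀ = K := by rw [hK, Matrix.transpose_mul, Matrix.transpose_transpose]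
  have hKtsym : Ktᵀ = Kt := by
    have := hKt.1.eq
    rwa [conjTranspose_eq_transpose_of_trivial] at this
  -- positivity
  have hKpos : ∀ x, 0 ≤ x ⬝ᵥ K *ᵥ x := by
    intro x
    rw [hK, ← mulVec_mulVec, dotProduct_mulVec, vecMul_transpose]
    exact Finset.sum_nonneg fun j _ => mul_self_nonneg _
  have hKtpos : ∀ x, 0 ≤ x ⬝ᵥ Kt *ᵥ x := by
    intro x
    have := hKt.dotProduct_mulVec_nonneg x
    simpa using this
  -- b is fixed by K Kp
  have hfixK : K *ᵥ (Kp *ᵥ b) = b := by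
    obtain ⟨y, hy⟩ := hrow
    rw [hy, mulVec_mulVec, mulVec_mulVec, hKp.1]
  -- b orthogonal to common kernel, so Kt (Ktp b) = b
  have hfixKt : Kt *ᵥ (Ktp *ᵥ b) = b := by
    apply range_fix hKtsym hKtp
    intro r hr
    obtain ⟨y, hy⟩ := hrow
    have hKr : K *ᵥ r = 0 := (hker r).mpr hr
    rw [hy, ← sym_dot hKsym, hKr, dotProduct_zero]
  -- u := Kp b lies in the range of K
  set u := Kp *ᵥ b with hu
  have hu_range : ∃ y, u = K *ᵥ y := by
    refine ⟨Kpᵀ *ᵥ u, ?_⟩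
    have hKpK : Kp * K = K * Kpᵀ := by
      calc Kp * K = (Kp * K)ᵀ := hKp.2.2.2.symm
      _ = Kᵀ * Kpᵀ := Matrix.transpose_mul _ _
      _ = K * Kpᵀ := by rw [hKsym]
    calc u = (Kp * K * Kp) *ᵥ b := by rw [hKp.2.1]
    _ = (K * Kpᵀ * Kp) *ᵥ b := by rw [hKpK]
    _ = K *ᵥ (Kpᵀ *ᵥ (Kp *ᵥ b)) := by rw [← mulVec_mulVec, ← mulVec_mulVec]
  -- v := Ktp b lies in the range of Kt, hence of K
  set v := Ktp *ᵥ b with hv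
  have hv_rangeKt : ∃ w, v = Kt *ᵥ w := by
    refine ⟨Ktpᵀ *ᵥ v, ?_⟩
    have hKtpK : Ktp * Kt = Kt * Ktpᵀ := by
      calc Ktp * Kt = (Ktp * Kt)ᵀ := hKtp.2.2.2.symm
      _ = Ktᵀ * Ktpᵀ := Matrix.transpose_mul _ _
      _ = Kt * Ktpᵀ := by rw [hKtsym]
    calc v = (Ktp * Kt * Ktp) *ᵥ b := by rw [hKtp.2.1]
    _ = (Kt * Ktpᵀ * Ktp) *ᵥ b := by rw [hKtpK]
    _ = Kt *ᵥ (Ktpᵀ *ᵥ (Ktp *ᵥ b)) := by rw [← mulVec_mulVec, ← mulVec_mulVec]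
  have hv_range : ∃ y, v = K *ᵥ y := by
    refine ⟨Kp *ᵥ v, (range_fix hKsym hKp v ?_).symm⟩
    intro r hr
    obtain ⟨w, hw⟩ := hv_rangeKt
    have hKtr : Kt *ᵥ r = 0 := (hker r).mp hr
    rw [hw, ← sym_dot hKtsym, hKtr, dotProduct_zero]
  -- the two leverage scores
  have hval_u : b ⬝ᵥ u = 2 * (b ⬝ᵥ u) - u ⬝ᵥ K *ᵥ u := by
    have : u ⬝ᵥ K *ᵥ u = b ⬝ᵥ u := by
      rw [sym_dot hKsym, hfixK, dotProduct_comm]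
    rw [this]; ring
  have hval_v : b ⬝ᵥ v = 2 * (b ⬝ᵥ v) - v ⬝ᵥ Kt *ᵥ v := by
    have : v ⬝ᵥ Kt *ᵥ v = b ⬝ᵥ v := by
      rw [sym_dot hKtsym, hfixKt, dotProduct_comm]
    rw [this]; ring
  constructor
  · -- τ ≤ τ̃
    have h1 : u ⬝ᵥ Kt *ᵥ u ≤ u ⬝ᵥ K *ᵥ u := (happrox u hu_range).2
    have h2 : 2 * (b ⬝ᵥ u) - u ⬝ᵥ Kt *ᵥ u ≤ b ⬝ᵥ v :=
      key_ineq hKtsym hKtpos hfixKt u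
    calc b ⬝ᵥ Kp *ᵥ b = 2 * (b ⬝ᵥ u) - u ⬝ᵥ K *ᵥ u := hval_u
    _ ≤ 2 * (b ⬝ᵥ u) - u ⬝ᵥ Kt *ᵥ u := by linarith
    _ ≤ b ⬝ᵥ v := h2
  · -- τ̃ ≤ (1/c) τ
    have h1 : c * (v ⬝ᵥ K *ᵥ v) ≤ v ⬝ᵥ Kt *ᵥ v := (happrox v hv_range).1
    have h2 : 2 * (b ⬝ᵥ (c • v)) - (c • v) ⬝ᵥ K *ᵥ (c • v) ≤ b ⬝ᵥ u :=
      key_ineq hKsym hKpos hfixK (c • v)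
    have e1 : b ⬝ᵥ (c • v) = c * (b ⬝ᵥ v) := by
      rw [dotProduct_smul, smul_eq_mul]
    have e2 : (c • v) ⬝ᵥ K *ᵥ (c • v) = c * c * (v ⬝ᵥ K *ᵥ v) := by
      rw [mulVec_smul, smul_dotProduct, dotProduct_smul, smul_eq_mul, smul_eq_mul]; ring
    rw [e1, e2] at h2
    rw [hval_v]
    rw [div_mul_eq_mul_div, le_div_iff₀ hc0, one_mul]
    have : (2 * (b ⬝ᵥ v) - v ⬝ᵥ Kt *ᵥ v) * c = c * (2 * (b ⬝ᵥ v)) - c * (v ⬝ᵥ Kt *ᵥ v) := by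
      ring
    nlinarith [h1, h2, hc0.le]
end

section
/- Let B ∈ ℝ^{m×n}, K = B^T B, and let K̃ be symmetric PSD with the same row span as K satisfying c·K ⪯_r K̃ ⪯_r K for 0 < c ≤ 1 (inequalities on the row span). For a row b_e of B, let x_e = B K̃^+ b_e. Then ‖x_e‖₂² ≤ (1/c)·b_e^T K̃^+ b_e. -/
open Matrix

open scoped RealInnerProductSpace

lemma range_incl {n : ℕ} (A C : Matrix (Fin n) (Fin n) ℝ)
    (hA : Aᵀ = A) (hC : Cᵀ = C)
    (hk : ∀ x, C.mulVec x = 0 → A.mulVec x = 0)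
    (b y : Fin n → ℝ) (hb : b = A.mulVec y) :
    ∃ z, b = C.mulVec z := by
  classical
  set eqv := WithLp.equiv 2 (Fin n → ℝ)
  set T := Matrix.toEuclideanLin C with hT
  set S := Matrix.toEuclideanLin A with hS
  have hCh : Cᴴ = C := by rw [conjTranspose_eq_transpose_of_trivial, hC]
  have hAh : Aᴴ = A := by rw [conjTranspose_eq_transpose_of_trivial, hA]
  have hTadj : LinearMap.adjoint T = T := by
    rw [hT, ← Matrix.toEuclideanLin_conjTranspose_eq_adjoint, hCh]
  have hSadj : LinearMap.adjoint S = S := by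
    rw [hS, ← Matrix.toEuclideanLin_conjTranspose_eq_adjoint, hAh]
  have hTsymm : ∀ u v : EuclideanSpace ℝ (Fin n), ⟪T u, v⟫ = ⟪u, T v⟫ := by
    intro u v; conv_lhs => rw [← hTadj]
    rw [LinearMap.adjoint_inner_left]
  have hSsymm : ∀ u v : EuclideanSpace ℝ (Fin n), ⟪S u, v⟫ = ⟪u, S v⟫ := by
    intro u v; conv_lhs => rw [← hSadj]
    rw [LinearMap.adjoint_inner_left]
  have hmem : (eqv.symm b) ∈ LinearMap.range T := by
    rw [← Submodule.orthogonal_orthogonal (LinearMap.range T)]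
    intro u hu
    have hTu : T u = 0 := by
      have h1 : ⟪T (T u), u⟫ = 0 := hu _ (LinearMap.mem_range_self T (T u))
      rw [hTsymm] at h1
      exact inner_self_eq_zero.mp h1
    have hCu : C.mulVec (eqv u) = 0 := by
      have := congrArg eqv (hTu)
      simpa [hT, Matrix.toEuclideanLin_apply, eqv] using this
    have hAu : A.mulVec (eqv u) = 0 := hk _ hCu
    have hSu : S u = 0 := by
      rw [hS, Matrix.toEuclideanLin_apply]
      simp [hAu]
      exact hAu
    have hbS : eqv.symm b = S (eqv.symm y) := by
      rw [hS, Matrix.toEuclideanLin_apply]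
      simp [hb, eqv]
    rw [hbS, ← hSsymm, hSu, inner_zero_left]
  obtain ⟨z, hz⟩ := hmem
  refine ⟨eqv z, ?_⟩
  have := congrArg eqv hz
  simpa [hT, Matrix.toEuclideanLin_apply, eqv] using this.symm

theorem x_e_norm_bound {m n : ℕ}
    (B : Matrix (Fin m) (Fin n) ℝ)
    (K Kt : Matrix (Fin n) (Fin n) ℝ) (hK : K = Bᵀ * B)
    (hKt : Kt.PosSemidef)
    (hker : ∀ x : Fin n → ℝ, K.mulVec x = 0 ↔ Kt.mulVec x = 0)
    (c : ℝ) (hc0 : 0 < c) (hc1 : c ≤ 1)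
    (happrox : ∀ x : Fin n → ℝ, (∃ y, x = K.mulVec y) →
      c * (x ⬝ᵥ K.mulVec x) ≤ x ⬝ᵥ Kt.mulVec x ∧ x ⬝ᵥ Kt.mulVec x ≤ x ⬝ᵥ K.mulVec x)
    (Ktp : Matrix (Fin n) (Fin n) ℝ) (hKtp : IsMoorePenrose Kt Ktp)
    (e : Fin m) (hrow : ∃ y, B e = K.mulVec y)
    (xe : Fin m → ℝ) (hxe : xe = B.mulVec (Ktp.mulVec (B e))) :
    xe ⬝ᵥ xe ≤ (1 / c) * (B e ⬝ᵥ Ktp.mulVec (B e)) := by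
  obtain ⟨hmp1, hmp2, hmp3, hmp4⟩ := hKtp
  have hKsym : Kᵀ = K := by rw [hK, transpose_mul, transpose_transpose]
  have hKtsym : Ktᵀ = Kt := by
    rw [← conjTranspose_eq_transpose_of_trivial, hKt.1.eq]
  obtain ⟨y, hy⟩ := hrow
  set b := B e with hb
  -- b in range of Kt
  obtain ⟨z, hz⟩ := range_incl K Kt hKsym hKtsym (fun x => (hker x).mpr) b y hy
  set v := Ktp.mulVec b with hv
  -- v in range of Kt
  have hv2 : v = Kt.mulVec ((Ktpᵀ).mulVec v) := by
    rw [mulVec_mulVec]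
    have h1 : Kt * Ktpᵀ = (Ktp * Kt)ᵀ := by rw [transpose_mul, hKtsym]
    rw [h1, hmp4]
    conv_lhs => rw [hv, hz, mulVec_mulVec, ← hmp2]
    rw [← mulVec_mulVec, ← mulVec_mulVec, ← hz, ← hv]
  -- v in range of K
  obtain ⟨w, hw⟩ := range_incl Kt K hKtsym hKsym (fun x => (hker x).mp) v _ hv2
  -- Kt v = b
  have hKtv : Kt.mulVec v = b := by
    rw [hv, hz, mulVec_mulVec, mulVec_mulVec, hmp1]
  -- xe ⬝ xe = v ⬝ K v
  have hxx : xe ⬝ᵥ xe = v ⬝ᵥ K.mulVec v := by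
    rw [hxe, hK, ← mulVec_mulVec]
    conv_rhs => rw [dotProduct_mulVec, vecMul_transpose]
  have h1 := (happrox v ⟨w, hw⟩).1
  rw [hKtv] at h1
  have hvb : v ⬝ᵥ b = b ⬝ᵥ v := dotProduct_comm v b
  rw [hxx, ← hvb]
  have h3 := mul_le_mul_of_nonneg_left h1 (by positivity : (0:ℝ) ≤ 1/c)
  calc v ⬝ᵥ K.mulVec v = (1/c) * (c * (v ⬝ᵥ K.mulVec v)) := by field_simp
    _ ≤ (1/c) * (v ⬝ᵥ b) := h3
end
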